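/- arXiv:2010.15489 — 2 statements merged into one kernel-verified Lean document; each statement's English description precedes it below -/
import Mathlib

section
/- Let V be a ℚ-vector space, g : V → V a ℚ-linear endomorphism, h ≥ 1 a natural number with g^h = id_V, and q a natural number with q ≥ 2. Let φ : V → ℚ be a linear functional and v ∈ V. Assume that for every i < h the value φ(g^i(v)) is an integer of absolute value at most q − 1, and that φ(g^{i}(v)) ≠ 0 for at least one i < h. Then the endomorphism q • g − id_V is bijective, and every w ∈ V satisfying q • g(w) − w = v has φ(w) ≠ 0. -/
open Finset in
lemma stmt5_key (q : ℤ) (hq : 2 ≤ q) (h : ℕ) (n : ℕ → ℤ)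
    (hb : ∀ i < h, |n i| ≤ q - 1) (hnz : ∃ i < h, n i ≠ 0) :
    ∑ i ∈ Finset.range h, q ^ i * n i ≠ 0 := by
  classical
  set s : Finset ℕ := (Finset.range h).filter (fun i => n i ≠ 0) with hs
  have hsne : s.Nonempty := by
    obtain ⟨i, hi, hni⟩ := hnz
    exact ⟨i, by simp [hs, hi, hni]⟩
  set j := s.max' hsne with hj
  have hjs : j ∈ s := s.max'_mem hsne
  have hjh : j < h := (Finset.mem_filter.mp hjs).1 |> Finset.mem_range.mp
  have hnj : n j ≠ 0 := (Finset.mem_filter.mp hjs).2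
  have hzero : ∀ i < h, j < i → n i = 0 := by
    intro i hi hji
    by_contra hni
    have : i ∈ s := by simp [hs, hi, hni]
    exact absurd (s.le_max' i this) (not_le.mpr hji)
  have hsum : ∑ i ∈ Finset.range h, q ^ i * n i
      = ∑ i ∈ Finset.range (j + 1), q ^ i * n i := by
    refine (Finset.sum_subset (Finset.range_subset_range.mpr hjh) ?_).symm
    intro i hi hni
    rw [hzero i (Finset.mem_range.mp hi)
      (by simpa using Finset.mem_range.not.mp hni), mul_zero]
  rw [hsum, Finset.sum_range_succ]
  have hrest : |∑ i ∈ Finset.range j, q ^ i * n i| ≤ q ^ j - 1 := by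
    calc |∑ i ∈ Finset.range j, q ^ i * n i|
        ≤ ∑ i ∈ Finset.range j, |q ^ i * n i| := Finset.abs_sum_le_sum_abs _ _
      _ ≤ ∑ i ∈ Finset.range j, q ^ i * (q - 1) := by
          refine Finset.sum_le_sum fun i hi => ?_
          rw [abs_mul, abs_pow, abs_of_nonneg (by omega : (0:ℤ) ≤ q)]
          exact mul_le_mul_of_nonneg_left
            (hb i (lt_trans (Finset.mem_range.mp hi) hjh))
            (pow_nonneg (by omega) i)
      _ = q ^ j - 1 := by rw [← Finset.sum_mul]; exact geom_sum_mul q j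
  have hbig : (q : ℤ) ^ j ≤ |q ^ j * n j| := by
    rw [abs_mul, abs_pow, abs_of_nonneg (by omega : (0:ℤ) ≤ q)]
    nlinarith [Int.one_le_abs hnj, pow_pos (by omega : (0:ℤ) < q) j]
  have hqj : (0:ℤ) < q ^ j := pow_pos (by omega) j
  intro hcontra
  have := abs_sub_abs_le_abs_sub (q ^ j * n j) (-(∑ i ∈ Finset.range j, q ^ i * n i))
  rw [abs_neg, sub_neg_eq_add, add_comm] at this
  rw [hcontra] at this
  simp at this
  simp only [abs_mul, abs_pow] at hbig
  omega

/-- The linear-algebraic and arithmetic core of the proof of Proposition 5.2: if `g` has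
finite order `h` on a `ℚ`-vector space `V`, `q ≥ 2`, and the values `φ (g^i v)` for `i < h`
are integers bounded in absolute value by `q - 1` and not all zero, then `q • g - id` is
bijective and any `w` with `q • g w - w = v` satisfies `φ w ≠ 0`. -/
theorem stmt_5 (V : Type*) [AddCommGroup V] [Module ℚ V]
    (g : V →ₗ[ℚ] V) (h : ℕ) (hh : 1 ≤ h) (hg : g ^ h = 1)
    (q : ℕ) (hq : 2 ≤ q)
    (φ : V →ₗ[ℚ] ℚ) (v : V)
    (hint : ∀ i < h, ∃ n : ℤ, φ ((g ^ i) v) = (n : ℚ) ∧ |n| ≤ (q : ℤ) - 1)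
    (hnz : ∃ i < h, φ ((g ^ i) v) ≠ 0) :
    Function.Bijective ((q : ℚ) • g - 1 : V →ₗ[ℚ] V) ∧
    ∀ w : V, (q : ℚ) • g w - w = v → φ w ≠ 0 := by
  classical
  set F : V →ₗ[ℚ] V := (q : ℚ) • g with hF
  have hFpow : ∀ i : ℕ, F ^ i = (q : ℚ) ^ i • g ^ i := fun i => smul_pow _ _ _
  set S : V →ₗ[ℚ] V := ∑ i ∈ Finset.range h, F ^ i with hS
  set c : ℚ := (q : ℚ) ^ h - 1 with hc
  have hq1 : (1 : ℚ) < (q : ℚ) ^ h := by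
    have : (1 : ℚ) < (q : ℚ) := by exact_mod_cast by omega
    exact one_lt_pow₀ this (by omega)
  have hcne : c ≠ 0 := by rw [hc]; linarith
  have hFS : (F - 1) * S = c • 1 := by
    rw [hS, mul_geom_sum, hFpow, hg, hc, sub_smul, one_smul]
  have hSF : S * (F - 1) = c • 1 := by
    rw [hS, geom_sum_mul, hFpow, hg, hc, sub_smul, one_smul]
  set T : V →ₗ[ℚ] V := c⁻¹ • S with hT
  have hFT : (F - 1) * T = 1 := by
    rw [hT, mul_smul_comm, hFS, smul_smul, inv_mul_cancel₀ hcne, one_smul]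
  have hTF : T * (F - 1) = 1 := by
    rw [hT, smul_mul_assoc, hSF, smul_smul, inv_mul_cancel₀ hcne, one_smul]
  have hbij : Function.Bijective ((q : ℚ) • g - 1 : V →ₗ[ℚ] V) := by
    refine Function.bijective_iff_has_inverse.mpr ⟨T, fun x => ?_, fun x => ?_⟩
    · rw [← Module.End.mul_apply, hTF, Module.End.one_apply]
    · rw [← Module.End.mul_apply, hFT, Module.End.one_apply]
  refine ⟨hbij, fun w hw => ?_⟩
  -- (F - 1) w = v
  have hwv : (F - 1) w = v := by
    simpa [hF, LinearMap.sub_apply, LinearMap.smul_apply] using hw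
  have hwT : w = T v := by
    rw [← hwv, ← Module.End.mul_apply, hTF, Module.End.one_apply]
  -- choose integer values
  have hchoice : ∀ i : ℕ, ∃ n : ℤ, (i < h → φ ((g ^ i) v) = (n : ℚ) ∧ |n| ≤ (q : ℤ) - 1) := by
    intro i
    by_cases hi : i < h
    · obtain ⟨n, hn⟩ := hint i hi; exact ⟨n, fun _ => hn⟩
    · exact ⟨0, fun hi' => absurd hi' hi⟩
  choose n hn using hchoice
  have hphiS : φ (S v) = ((∑ i ∈ Finset.range h, (q : ℤ) ^ i * n i : ℤ) : ℚ) := by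
    rw [hS, LinearMap.sum_apply, map_sum]
    push_cast
    refine Finset.sum_congr rfl fun i hi => ?_
    rw [hFpow, LinearMap.smul_apply, map_smul, smul_eq_mul,
      (hn i (Finset.mem_range.mp hi)).1]
  have hsumne : (∑ i ∈ Finset.range h, (q : ℤ) ^ i * n i : ℤ) ≠ 0 := by
    refine stmt5_key (q : ℤ) (by exact_mod_cast hq) h n
      (fun i hi => (hn i hi).2) ?_
    obtain ⟨i, hi, hni⟩ := hnz
    refine ⟨i, hi, fun h0 => hni ?_⟩
    rw [(hn i hi).1, h0, Int.cast_zero]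
  rw [hwT, hT, LinearMap.smul_apply, map_smul, smul_eq_mul, hphiS]
  exact mul_ne_zero (inv_ne_zero hcne) (by exact_mod_cast hsumne)
end

section
/- Let (W, S) be a Coxeter system with length function ℓ, and let σ : W → W be a group automorphism mapping the set S of simple reflections bijectively onto itself. Let J and K be subsets of S which are stable under σ (σ(J) = J and σ(K) = K), and let W_J and W_K denote the subgroups of W generated by J and K respectively. Suppose x ∈ W has minimal length in its double coset W_K x W_J, i.e. ℓ(x) ≤ ℓ(z · x · y) for all z ∈ W_K and y ∈ W_J. If there exist y ∈ W_J and z ∈ W_K with x · y = z · σ(x), then ℓ(y) = ℓ(z) and σ(x) = x. -/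
set_option linter.unusedSectionVars false
set_option linter.unusedVariables false

namespace Stmt6Aux

open List CoxeterSystem
open scoped Classical

variable {B W : Type*} [Group W] {M : CoxeterMatrix B} (cs : CoxeterSystem M W)

local prefix:100 "s" => cs.simple
local prefix:100 "π" => cs.wordProd
local prefix:100 "ℓ" => cs.length

/-- count of `t` in a list of group elements -/
noncomputable def cnt (t : W) (l : List W) : ℕ := l.countP (fun x => decide (x = t))

lemma cnt_nil (t : W) : cnt t ([] : List W) = 0 := rfl

lemma cnt_cons (t a : W) (l : List W) :
    cnt t (a :: l) = cnt t l + if a = t then 1 else 0 := by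
  simp [cnt, List.countP_cons]

lemma cnt_append (t : W) (l l' : List W) : cnt t (l ++ l') = cnt t l + cnt t l' := by
  simp [cnt, List.countP_append]

lemma mem_of_cnt_pos {t : W} {l : List W} (h : 0 < cnt t l) : t ∈ l := by
  obtain ⟨a, ha, he⟩ := List.countP_pos_iff.mp h
  simp only [decide_eq_true_eq] at he
  exact he ▸ ha

/-- The Tits reflection-parity map. -/
noncomputable def tperm (i : B) : Function.End (W × ZMod 2) :=
  fun p => (s i * p.1 * s i, p.2 + if p.1 = s i then 1 else 0)

lemma ris_cons (i : B) (ω : List B) :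
    cs.rightInvSeq (i :: ω) = ((π ω)⁻¹ * s i * π ω) :: cs.rightInvSeq ω := rfl

lemma prodMap (ω : List B) (p : W × ZMod 2) :
    (ω.map (tperm cs)).prod p
      = (π ω * p.1 * (π ω)⁻¹, p.2 + (cnt p.1 (cs.rightInvSeq ω) : ZMod 2)) := by
  induction ω generalizing p with
  | nil => simp [cnt_nil, Function.End.one_def]
  | cons i ω ih =>
    rw [List.map_cons, List.prod_cons, Function.End.mul_def]
    show tperm cs i ((ω.map (tperm cs)).prod p) = _
    rw [ih]
    show tperm cs i _ = _
    rw [tperm]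
    have hcond : (π ω * p.1 * (π ω)⁻¹ = s i) ↔ ((π ω)⁻¹ * s i * π ω = p.1) := by
      constructor <;> intro h <;> rw [← h] <;> group
    rw [ris_cons, cnt_cons]
    have : (if π ω * p.1 * (π ω)⁻¹ = s i then (1:ZMod 2) else 0)
        = (if (π ω)⁻¹ * s i * π ω = p.1 then (1:ZMod 2) else 0) := by
      simp [hcond]
    refine Prod.ext ?_ ?_
    · show s i * (π ω * p.1 * (π ω)⁻¹) * s i = _
      rw [cs.wordProd_cons]
      rw [mul_inv_rev, cs.inv_simple]
      group
    · show p.2 + _ + _ = p.2 + _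
      rw [this]
      push_cast
      ring
lemma simple_conj_pow (i j : B) (n : ℕ) :
    s j * (s i * s j) ^ n = ((s i * s j)⁻¹) ^ n * s j := by
  induction n with
  | zero => simp
  | succ n ih =>
    have h1 : s j * (s i * s j) = (s i * s j)⁻¹ * s j := by
      rw [mul_inv_rev, cs.inv_simple, cs.inv_simple, ← mul_assoc]
    rw [pow_succ', ← mul_assoc, h1, mul_assoc, ih, ← mul_assoc, ← pow_succ']

lemma simple_conj_pow' (i j : B) (n : ℕ) :
    s i * ((s i * s j)⁻¹) ^ n = (s i * s j) ^ n * s i := by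
  induction n with
  | zero => simp
  | succ n ih =>
    have h1 : s i * (s i * s j)⁻¹ = (s i * s j) * s i := by
      rw [mul_inv_rev, cs.inv_simple, cs.inv_simple, ← mul_assoc]
    rw [pow_succ', ← mul_assoc, h1, mul_assoc, ih, ← mul_assoc, ← pow_succ']

lemma rho (i j : B) (q : ℕ) :
    (π (alternatingWord i j q))⁻¹ * s (if Even q then j else i) * π (alternatingWord i j q)
      = ((s i * s j)⁻¹) ^ q * s j := by
  rcases Nat.even_or_odd q with he | ho
  · obtain ⟨r, rfl⟩ := he
    have hq : Even (r + r) := ⟨r, rfl⟩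
    rw [if_pos hq, cs.prod_alternatingWord_eq_mul_pow, if_pos hq]
    have hdiv : (r + r) / 2 = r := by omega
    rw [hdiv, one_mul, ← inv_pow]
    rw [mul_assoc, simple_conj_pow cs i j r, ← mul_assoc, ← pow_add]
  · obtain ⟨r, rfl⟩ := ho
    have hq : ¬ Even (2 * r + 1) := by simp [Nat.even_add_one, Nat.even_iff, Nat.mul_mod_right]
    rw [if_neg hq, cs.prod_alternatingWord_eq_mul_pow, if_neg hq]
    have hdiv : (2 * r + 1) / 2 = r := by omega
    rw [hdiv]
    rw [mul_inv_rev, ← inv_pow, cs.inv_simple]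
    simp only [mul_assoc]
    rw [simple_conj_pow cs i j r, ← mul_assoc (s i), simple_conj_pow' cs i j r,
      mul_assoc _ (s i), ← pow_succ, simple_conj_pow cs i j (r + 1), ← mul_assoc, ← pow_add,
      show r + (r + 1) = 2 * r + 1 by omega]

lemma ris_alternatingWord (i j : B) (n : ℕ) :
    cs.rightInvSeq (alternatingWord i j n)
      = ((List.range n).reverse).map (fun q => ((s i * s j)⁻¹) ^ q * s j) := by
  induction n with
  | zero => simp [alternatingWord]
  | succ n ih =>
    rw [alternatingWord_succ', ris_cons, ih, List.range_succ, List.reverse_append]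
    simp only [List.reverse_cons, List.reverse_nil, List.nil_append, List.singleton_append,
      List.map_cons]
    congr 1
    exact rho cs i j n

lemma cnt_ris_alt_even (i j : B) (t : W) :
    Even (cnt t (cs.rightInvSeq (alternatingWord i j (2 * M i j)))) := by
  rw [ris_alternatingWord]
  set g : ℕ → W := fun q => ((s i * s j)⁻¹) ^ q * s j with hg
  have hcrev : ∀ l : List W, cnt t l.reverse = cnt t l := by
    intro l; simp [cnt, List.countP_reverse]
  rw [List.map_reverse, hcrev]
  rw [two_mul, List.range_add, List.map_append, cnt_append]
  have : (List.map (fun x => M i j + x) (List.range (M i j))).map g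
      = (List.range (M i j)).map g := by
    rw [List.map_map]
    apply List.map_congr_left
    intro a _
    show g (M i j + a) = g a
    rw [hg]
    simp only
    rw [pow_add, inv_pow, cs.simple_mul_simple_pow, inv_one, one_mul]
  rw [this]
  exact ⟨_, rfl⟩

lemma tperm_liftable : M.IsLiftable (tperm cs) := by
  intro i j
  have key : ∀ k : ℕ, ((tperm cs i * tperm cs j) ^ k : Function.End (W × ZMod 2))
      = ((alternatingWord i j (2 * k)).map (tperm cs)).prod := by
    intro k
    induction k with
    | zero => simp [alternatingWord]
    | succ k ih =>
      have h2 : 2 * (k + 1) = (2 * k + 1) + 1 := by omega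
      rw [h2, alternatingWord_succ', alternatingWord_succ']
      have hodd : ¬ Even (2 * k + 1) := by
        simp [Nat.even_add_one, Nat.even_iff, Nat.mul_mod_right]
      rw [if_neg hodd, if_pos (even_two_mul k)]
      rw [List.map_cons, List.map_cons, List.prod_cons, List.prod_cons, ← ih,
        pow_succ', mul_assoc]
  rw [key (M i j)]
  funext p
  rw [prodMap]
  have h1 : π (alternatingWord i j (2 * M i j)) = 1 := by
    rw [cs.prod_alternatingWord_eq_mul_pow]
    rw [if_pos (even_two_mul (M i j))]
    rw [show 2 * M i j / 2 = M i j by omega, one_mul, cs.simple_mul_simple_pow]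
  obtain ⟨c, hc⟩ := cnt_ris_alt_even cs i j p.1
  rw [h1, hc]
  show (1 * p.1 * 1⁻¹, p.2 + ((c + c : ℕ) : ZMod 2)) = p
  push_cast
  have h2 : (c : ZMod 2) + c = 0 := by
    calc (c : ZMod 2) + c = 2 * c := by ring
    _ = 0 := by rw [show (2 : ZMod 2) = 0 by decide]; ring
  rw [h2]
  simp
/-- The Tits parity representation. -/
noncomputable def mu : W →* Function.End (W × ZMod 2) := cs.lift ⟨tperm cs, tperm_liftable cs⟩

lemma mu_simple (i : B) : mu cs (s i) = tperm cs i := cs.lift_apply_simple (tperm_liftable cs) i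

lemma mu_wordProd (ω : List B) : mu cs (π ω) = (ω.map (tperm cs)).prod := by
  show mu cs (List.prod (ω.map cs.simple)) = _
  rw [MonoidHom.map_list_prod, List.map_map]
  congr 1
  apply List.map_congr_left
  intro i _
  exact mu_simple cs i

lemma mu_apply (ω : List B) (p : W × ZMod 2) :
    mu cs (π ω) p = (π ω * p.1 * (π ω)⁻¹, p.2 + (cnt p.1 (cs.rightInvSeq ω) : ZMod 2)) := by
  rw [mu_wordProd, prodMap]

lemma cnt_parity_eq {ω ω' : List B} (h : π ω = π ω') (t : W) :
    (cnt t (cs.rightInvSeq ω) : ZMod 2) = (cnt t (cs.rightInvSeq ω') : ZMod 2) := by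
  have h1 := mu_apply cs ω (t, 0)
  have h2 := mu_apply cs ω' (t, 0)
  rw [h] at h1
  rw [h1] at h2
  have := congrArg Prod.snd h2
  simpa using this

lemma mu_apply' (w : W) (p : W × ZMod 2) :
    mu cs w p = (w * p.1 * w⁻¹, p.2 + (mu cs w (p.1, 0)).2) := by
  obtain ⟨ω, rfl⟩ := cs.wordProd_surjective w
  rw [mu_apply, mu_apply]
  simp

lemma mu_reflection {t : W} (ht : cs.IsReflection t) (ε : ZMod 2) :
    mu cs t (t, ε) = (t, ε + 1) := by
  obtain ⟨w, i, rfl⟩ := ht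
  set t := w * s i * w⁻¹ with hdef
  set c : ZMod 2 := (mu cs w (s i, 0)).2 with hc
  set c' : ZMod 2 := (mu cs w⁻¹ (t, 0)).2 with hc'
  have h1 : ∀ ε' : ZMod 2, mu cs w (s i, ε') = (t, ε' + c) := by
    intro ε'; rw [mu_apply' cs w (s i, ε')]
  have h2 : ∀ ε' : ZMod 2, mu cs w⁻¹ (t, ε') = (s i, ε' + c') := by
    intro ε'
    rw [mu_apply' cs w⁻¹ (t, ε')]
    congr 1
    rw [hdef]
    group
  have hcc : c' + c = 0 := by
    have h3 : mu cs w (mu cs w⁻¹ (t, 0)) = (t, 0) := by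
      have : mu cs w * mu cs w⁻¹ = 1 := by rw [← map_mul, mul_inv_cancel, map_one]
      calc mu cs w (mu cs w⁻¹ (t, 0)) = (mu cs w * mu cs w⁻¹) (t, 0) := rfl
        _ = (t, 0) := by rw [this]; rfl
    rw [h2, h1] at h3
    have := congrArg Prod.snd h3
    simpa [add_assoc] using this
  have hmul : mu cs t = mu cs w * mu cs (s i) * mu cs w⁻¹ := by
    rw [← map_mul, ← map_mul]
  rw [hmul]
  show mu cs w (mu cs (s i) (mu cs w⁻¹ (t, ε))) = (t, ε + 1)
  rw [h2, mu_simple]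
  show mu cs w (s i * s i * s i, ε + c' + if s i = s i then 1 else 0) = (t, ε + 1)
  rw [if_pos rfl]
  simp only [cs.simple_mul_simple_self, one_mul]
  rw [h1]
  have : ε + c' + 1 + c = ε + 1 + (c' + c) := by ring
  rw [this, hcc, add_zero]

lemma descent_of_odd_cnt :
    ∀ ω : List B, cs.IsReduced ω → ∀ t : W, Odd (cnt t (cs.rightInvSeq ω)) →
      ℓ (π ω * t) < ℓ (π ω) := by
  intro ω
  induction ω with
  | nil =>
    intro _ t hodd
    rw [cs.rightInvSeq_nil, cnt_nil] at hodd
    exact absurd hodd (by simp [Nat.odd_iff])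
  | cons i ω ih =>
    intro hred t hodd
    have hred' : cs.IsReduced ω := by
      have := hred.drop 1
      simpa using this
    have hlen : ℓ (π (i :: ω)) = ω.length + 1 := by
      rw [hred]; simp
    have hlen' : ℓ (π ω) = ω.length := hred'
    by_cases hc : (π ω)⁻¹ * s i * π ω = t
    · have : π (i :: ω) * t = π ω := by
        rw [cs.wordProd_cons, ← hc]
        simp [mul_assoc]
      rw [this]; omega
    · have hcnt : cnt t (cs.rightInvSeq (i :: ω)) = cnt t (cs.rightInvSeq ω) := by
        rw [ris_cons, cnt_cons, if_neg hc, add_zero]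
      rw [hcnt] at hodd
      have hlt := ih hred' t hodd
      have hb : ℓ (π (i :: ω) * t) ≤ ℓ (π ω * t) + 1 := by
        rw [cs.wordProd_cons, mul_assoc]
        rcases cs.length_simple_mul (π ω * t) i with h | h <;> omega
      omega

lemma odd_cnt_of_descent (ω : List B) (hred : cs.IsReduced ω) {t : W}
    (ht : cs.IsReflection t) (hlt : ℓ (π ω * t) < ℓ (π ω)) :
    Odd (cnt t (cs.rightInvSeq ω)) := by
  obtain ⟨β, hβlen, hβ⟩ := cs.exists_reduced_word (π ω * t)
  have hβred : cs.IsReduced β := by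
    exact hβlen
  have hne : ¬ Odd (cnt t (cs.rightInvSeq β)) := by
    intro h
    have h2 := descent_of_odd_cnt cs β hβred t h
    rw [← hβ] at h2
    rw [mul_assoc, ht.mul_self, mul_one] at h2
    omega
  have h0 : (cnt t (cs.rightInvSeq β) : ZMod 2) = 0 := by
    rw [Nat.not_odd_iff_even] at hne
    obtain ⟨c, hc⟩ := hne
    rw [hc]; push_cast
    calc (c : ZMod 2) + c = 2 * c := by ring
      _ = 0 := by rw [show (2 : ZMod 2) = 0 by decide]; ring
  -- compute (mu cs (π ω) (t, 0)).2 in two ways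
  have e1 : (mu cs (π ω) (t, 0)).2 = (cnt t (cs.rightInvSeq ω) : ZMod 2) := by
    rw [mu_apply]; simp
  have e2 : (mu cs (π ω) (t, 0)).2 = 1 := by
    have hw : π ω = (π ω * t) * t := by rw [mul_assoc, ht.mul_self, mul_one]
    rw [hw, map_mul]
    show (mu cs (π ω * t) (mu cs t (t, 0))).2 = 1
    rw [mu_reflection cs ht 0, hβ, mu_apply]
    simp [h0]
  rw [e1] at e2
  rw [Nat.odd_iff]
  rcases Nat.even_or_odd (cnt t (cs.rightInvSeq ω)) with h | h
  · exfalso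
    obtain ⟨c, hc⟩ := h
    rw [hc] at e2
    push_cast at e2
    have : (c : ZMod 2) + c = 0 := by
      calc (c : ZMod 2) + c = 2 * c := by ring
        _ = 0 := by rw [show (2 : ZMod 2) = 0 by decide]; ring
    rw [this] at e2
    exact absurd e2 (by decide)
  · exact Nat.odd_iff.mp h

/-- The (simple right) exchange property. -/
lemma exchange {ω : List B} (hred : cs.IsReduced ω) {i : B}
    (hlt : ℓ (π ω * s i) < ℓ (π ω)) :
    ∃ j < ω.length, π ω * s i = π (ω.eraseIdx j) := by
  have hodd := odd_cnt_of_descent cs ω hred (cs.isReflection_simple i) hlt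
  have hpos : 0 < cnt (s i) (cs.rightInvSeq ω) := by
    rcases Nat.eq_zero_or_pos (cnt (s i) (cs.rightInvSeq ω)) with h | h
    · rw [h] at hodd; exact absurd hodd (by simp [Nat.odd_iff])
    · exact h
  obtain ⟨j, hj, hget⟩ := List.getElem_of_mem (mem_of_cnt_pos hpos)
  have hj' : j < ω.length := by
    rw [cs.length_rightInvSeq] at hj; exact hj
  refine ⟨j, hj', ?_⟩
  have := cs.wordProd_mul_getD_rightInvSeq ω j
  rw [← this]
  congr 1
  rw [List.getD_eq_getElem _ _ hj, hget]
lemma wordProd_mem_closure {A : Set W} {ω : List B} (h : ∀ i ∈ ω, s i ∈ A) :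
    π ω ∈ Subgroup.closure A := by
  induction ω with
  | nil => rw [cs.wordProd_nil]; exact one_mem _
  | cons i ω ih =>
    rw [cs.wordProd_cons]
    exact mul_mem (Subgroup.subset_closure (h i (List.mem_cons_self)))
      (ih fun j hj => h j (List.mem_cons_of_mem i hj))

lemma reduce_word {A : Set W} :
    ∀ ω : List B, (∀ i ∈ ω, s i ∈ A) →
      ∃ ω', (∀ i ∈ ω', s i ∈ A) ∧ cs.IsReduced ω' ∧ π ω' = π ω := by
  intro ω
  induction ω using List.reverseRecOn with
  | nil =>
    intro _
    exact ⟨[], by simp, by show ℓ (π []) = _; simp, rfl⟩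
  | append_singleton γ i ih =>
    intro h
    obtain ⟨ω'', hl, hred, hπ⟩ := ih fun j hj => h j (List.mem_append_left _ hj)
    have hiA : s i ∈ A := h i (List.mem_append_right _ (List.mem_singleton_self i))
    have hπγi : π (γ ++ [i]) = π ω'' * s i := by
      rw [cs.wordProd_append, cs.wordProd_singleton, hπ]
    rcases cs.length_mul_simple (π ω'') i with hinc | hdec
    · refine ⟨ω'' ++ [i], ?_, ?_, ?_⟩
      · intro j hj
        rcases List.mem_append.mp hj with hj | hj
        · exact hl j hj
        · rw [List.mem_singleton.mp hj]; exact hiA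
      · show ℓ (π (ω'' ++ [i])) = _
        rw [cs.wordProd_append, cs.wordProd_singleton, hinc, List.length_append,
          List.length_singleton, hred]
      · rw [cs.wordProd_append, cs.wordProd_singleton, hπγi]
    · have hlt : ℓ (π ω'' * s i) < ℓ (π ω'') := by omega
      obtain ⟨j, hj, hex⟩ := exchange cs hred hlt
      refine ⟨ω''.eraseIdx j, ?_, ?_, ?_⟩
      · intro k hk
        exact hl k ((List.eraseIdx_sublist ω'' j).mem hk)
      · show ℓ (π (ω''.eraseIdx j)) = _
        rw [← hex, List.length_eraseIdx, if_pos hj]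
        have : ℓ (π ω'') = ω''.length := hred
        omega
      · rw [← hex, hπγi]

lemma exists_reduced_word_subset {A : Set W} (hA : A ⊆ Set.range cs.simple) :
    ∀ w ∈ Subgroup.closure A,
      ∃ ω : List B, (∀ i ∈ ω, s i ∈ A) ∧ cs.IsReduced ω ∧ w = π ω := by
  have main : ∀ w ∈ Subgroup.closure A, ∃ ω : List B, (∀ i ∈ ω, s i ∈ A) ∧ w = π ω := by
    intro w hw
    induction hw using Subgroup.closure_induction with
    | mem w hw =>
      obtain ⟨i, hi⟩ := hA hw
      exact ⟨[i], by simpa [← hi] using hw, by rw [cs.wordProd_singleton, hi]⟩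
    | one => exact ⟨[], by simp, by rw [cs.wordProd_nil]⟩
    | mul a b _ _ iha ihb =>
      obtain ⟨ωa, ha, rfl⟩ := iha
      obtain ⟨ωb, hb, rfl⟩ := ihb
      refine ⟨ωa ++ ωb, ?_, by rw [cs.wordProd_append]⟩
      intro j hj
      rcases List.mem_append.mp hj with hj | hj
      · exact ha j hj
      · exact hb j hj
    | inv a _ iha =>
      obtain ⟨ωa, ha, rfl⟩ := iha
      exact ⟨ωa.reverse, fun j hj => ha j (List.mem_reverse.mp hj),
        by rw [cs.wordProd_reverse]⟩
  intro w hw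
  obtain ⟨ω, hωA, rfl⟩ := main w hw
  obtain ⟨ω', h1, h2, h3⟩ := reduce_word cs ω hωA
  exact ⟨ω', h1, h2, h3.symm⟩

lemma length_mul_right_add {A : Set W} (hA : A ⊆ Set.range cs.simple) (x : W)
    (hminr : ∀ y ∈ Subgroup.closure A, ℓ x ≤ ℓ (x * y)) :
    ∀ y ∈ Subgroup.closure A, ℓ (x * y) = ℓ x + ℓ y := by
  have claim : ∀ δ : List B, (∀ i ∈ δ, s i ∈ A) → cs.IsReduced δ →
      ℓ (x * π δ) = ℓ x + δ.length := by
    intro δ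
    induction δ using List.reverseRecOn with
    | nil => intro _ _; simp
    | append_singleton γ i ih =>
      intro hlet hred
      have hγlet : ∀ j ∈ γ, s j ∈ A := fun j hj => hlet j (List.mem_append_left _ hj)
      have hγred : cs.IsReduced γ := by
        have := hred.take γ.length
        rwa [List.take_left] at this
      have hIH : ℓ (x * π γ) = ℓ x + γ.length := ih hγlet hγred
      have hsiA : s i ∈ A := hlet i (List.mem_append_right _ (List.mem_singleton_self i))
      have hgoal : π (γ ++ [i]) = π γ * s i := by
        rw [cs.wordProd_append, cs.wordProd_singleton]
      rw [hgoal, List.length_append, List.length_singleton, ← mul_assoc]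
      rcases cs.length_mul_simple (x * π γ) i with hinc | hdec
      · omega
      · exfalso
        obtain ⟨χ, hχlen, hχ⟩ := cs.exists_reduced_word x
        have hχγ : π (χ ++ γ) = x * π γ := by rw [cs.wordProd_append, ← hχ]
        have hχγred : cs.IsReduced (χ ++ γ) := by
          show ℓ (π (χ ++ γ)) = _
          rw [hχγ, hIH, List.length_append]
          have : ℓ (π γ) = γ.length := hγred
          have hχl' : ℓ x = χ.length := by rw [hχ]; exact hχlen
          omega
        have hdrop : ℓ (π (χ ++ γ) * s i) < ℓ (π (χ ++ γ)) := by
          rw [hχγ]; omega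
        obtain ⟨j, hj, hex⟩ := exchange cs hχγred hdrop
        rw [hχγ] at hex
        by_cases hjχ : j < χ.length
        · rw [List.eraseIdx_append_of_lt_length hjχ] at hex
          rw [cs.wordProd_append] at hex
          have hx' : x * (π γ * s i * (π γ)⁻¹) = π (χ.eraseIdx j) := by
            rw [← mul_assoc, ← mul_assoc, hex, mul_assoc, mul_inv_cancel, mul_one]
          have husu : π γ * s i * (π γ)⁻¹ ∈ Subgroup.closure A :=
            mul_mem (mul_mem (wordProd_mem_closure cs hγlet)
              (Subgroup.subset_closure hsiA)) (inv_mem (wordProd_mem_closure cs hγlet))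
          have hle := hminr _ husu
          rw [hx'] at hle
          have hle2 := cs.length_wordProd_le (χ.eraseIdx j)
          rw [List.length_eraseIdx, if_pos hjχ] at hle2
          have hχl : χ.length = ℓ x := by rw [hχ]; exact hχlen.symm
          omega
        · push_neg at hjχ
          rw [List.eraseIdx_append_of_length_le hjχ] at hex
          rw [cs.wordProd_append, ← hχ] at hex
          have hus : π γ * s i = π (γ.eraseIdx (j - χ.length)) := by
            rw [mul_assoc] at hex
            exact mul_left_cancel hex
          have hle := cs.length_wordProd_le (γ.eraseIdx (j - χ.length))
          rw [← hus] at hle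
          have hjlt : j - χ.length < γ.length := by
            rw [List.length_append] at hj; omega
          rw [List.length_eraseIdx, if_pos hjlt] at hle
          have : ℓ (π (γ ++ [i])) = γ.length + 1 := by
            rw [hred, List.length_append, List.length_singleton]
          rw [hgoal] at this
          omega
  intro y hy
  obtain ⟨δ, hδA, hδred, rfl⟩ := exists_reduced_word_subset cs hA y hy
  rw [claim δ hδA hδred]
  have : ℓ (π δ) = δ.length := hδred
  omega

lemma length_mul_left_add {A : Set W} (hA : A ⊆ Set.range cs.simple) (x : W)
    (hminl : ∀ z ∈ Subgroup.closure A, ℓ x ≤ ℓ (z * x)) :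
    ∀ z ∈ Subgroup.closure A, ℓ (z * x) = ℓ z + ℓ x := by
  intro z hz
  have h1 : ∀ y ∈ Subgroup.closure A, ℓ x⁻¹ ≤ ℓ (x⁻¹ * y) := by
    intro y hy
    rw [cs.length_inv, show x⁻¹ * y = (y⁻¹ * x)⁻¹ by group, cs.length_inv]
    exact hminl y⁻¹ (inv_mem hy)
  have h2 := length_mul_right_add cs hA x⁻¹ h1 z⁻¹ (inv_mem hz)
  rw [show x⁻¹ * z⁻¹ = (z * x)⁻¹ by group, cs.length_inv, cs.length_inv, cs.length_inv] at h2
  omega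
lemma unique_min {J K : Set W} (hJ : J ⊆ Set.range cs.simple) (hK : K ⊆ Set.range cs.simple)
    (x u : W)
    (hminx : ∀ z ∈ Subgroup.closure K, ∀ y ∈ Subgroup.closure J, ℓ x ≤ ℓ (z * x * y))
    (hminu : ∀ z ∈ Subgroup.closure K, ∀ y ∈ Subgroup.closure J, ℓ u ≤ ℓ (z * u * y)) :
    ∀ n : ℕ, ∀ y ∈ Subgroup.closure J, ℓ y = n → ∀ z ∈ Subgroup.closure K,
      x * y = z * u → u = x := by
  have hminxr : ∀ y ∈ Subgroup.closure J, ℓ x ≤ ℓ (x * y) := by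
    intro y hy
    have := hminx 1 (one_mem _) y hy
    rwa [one_mul] at this
  have hminul : ∀ z ∈ Subgroup.closure K, ℓ u ≤ ℓ (z * u) := by
    intro z hz
    have := hminu z hz 1 (one_mem _)
    rwa [mul_one] at this
  intro n
  induction n with
  | zero =>
    intro y hy hylen z hz hxy
    have hy1 : y = 1 := cs.length_eq_zero_iff.mp hylen
    rw [hy1, mul_one] at hxy
    have hux : ℓ u ≤ ℓ x := by
      have := hminu z hz 1 (one_mem _)
      rwa [mul_one, ← hxy] at this
    have hxu : ℓ x ≤ ℓ u := by
      have he : z⁻¹ * x * 1 = u := by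
        rw [mul_one, hxy, ← mul_assoc, inv_mul_cancel, one_mul]
      have := hminx z⁻¹ (inv_mem hz) 1 (one_mem _)
      rwa [he] at this
    have hzu : ℓ (z * u) = ℓ z + ℓ u := length_mul_left_add cs hK u hminul z hz
    have hz0 : ℓ z = 0 := by
      rw [← hxy] at hzu
      omega
    rw [cs.length_eq_zero_iff.mp hz0, one_mul] at hxy
    exact hxy.symm
  | succ n ih =>
    intro y hy hylen z hz hxy
    obtain ⟨δ, hδJ, hδred, hyδ⟩ := exists_reduced_word_subset cs hJ y hy
    have hδlen : δ.length = n + 1 := by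
      have h : ℓ (π δ) = δ.length := hδred
      rw [← hyδ] at h
      omega
    rcases δ.eq_nil_or_concat' with rfl | ⟨γ, i, rfl⟩
    · simp at hδlen
    have hγJ : ∀ j ∈ γ, s j ∈ J := fun j hj => hδJ j (List.mem_append_left _ hj)
    have hsiJ : s i ∈ J := hδJ i (List.mem_append_right _ (List.mem_singleton_self i))
    have hγred : cs.IsReduced γ := by
      have := hδred.take γ.length
      rwa [List.take_left] at this
    have hγlen : γ.length = n := by
      rw [List.length_append, List.length_singleton] at hδlen
      omega
    set y' := π γ with hy'
    have hy'J : y' ∈ Subgroup.closure J := wordProd_mem_closure cs hγJ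
    have hy'len : ℓ y' = n := by
      have h : ℓ (π γ) = γ.length := hγred
      rw [hy']
      omega
    have hysplit : y = y' * s i := by
      rw [hyδ, cs.wordProd_append, cs.wordProd_singleton]
    -- length computations
    have hlu : ℓ u = ℓ x := by
      have h1 : ℓ u ≤ ℓ x := by
        have he : z * u * y⁻¹ = x := by
          rw [← hxy, mul_assoc, mul_inv_cancel, mul_one]
        have h := hminu z hz y⁻¹ (inv_mem hy)
        rwa [he] at h
      have h2 : ℓ x ≤ ℓ u := by
        have he : z⁻¹ * x * y = u := by
          rw [mul_assoc, hxy, ← mul_assoc, inv_mul_cancel, one_mul]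
        have h := hminx z⁻¹ (inv_mem hz) y hy
        rwa [he] at h
      omega
    have hxylen : ℓ (x * y) = ℓ x + (n + 1) := by
      rw [length_mul_right_add cs hJ x hminxr y hy, hylen]
    have hzulen : ℓ (z * u) = ℓ z + ℓ u := length_mul_left_add cs hK u hminul z hz
    have hzlen : ℓ z = n + 1 := by
      rw [hxy] at hxylen
      omega
    have h1 : z * u * s i = x * y' := by
      rw [← hxy, hysplit, mul_assoc]
      simp
    have hxy'len : ℓ (x * y') = ℓ x + n := by
      rw [length_mul_right_add cs hJ x hminxr y' hy'J, hy'len]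
    have hdrop : ℓ (z * u * s i) < ℓ (z * u) := by
      rw [h1]
      omega
    obtain ⟨α, hαK, hαred, hzα⟩ := exists_reduced_word_subset cs hK z hz
    obtain ⟨β, hβlen, hβ⟩ := cs.exists_reduced_word u
    have hβred : cs.IsReduced β := by
      exact hβlen
    have happ : π (α ++ β) = z * u := by rw [cs.wordProd_append, ← hzα, ← hβ]
    have hαlen : α.length = n + 1 := by
      have h : ℓ (π α) = α.length := hαred
      rw [← hzα] at h
      omega
    have happred : cs.IsReduced (α ++ β) := by
      show ℓ (π (α ++ β)) = _
      rw [happ, hzulen, List.length_append]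
      have : ℓ u = β.length := by rw [hβ]; exact hβlen
      omega
    have hdrop' : ℓ (π (α ++ β) * s i) < ℓ (π (α ++ β)) := by rw [happ]; exact hdrop
    obtain ⟨j, hj, hex⟩ := exchange cs happred hdrop'
    rw [happ] at hex
    by_cases hjα : j < α.length
    · rw [List.eraseIdx_append_of_lt_length hjα, cs.wordProd_append, ← hβ] at hex
      have hz'K : π (α.eraseIdx j) ∈ Subgroup.closure K :=
        wordProd_mem_closure cs (fun k hk => hαK k ((List.eraseIdx_sublist α j).mem hk))
      have hxyz' : x * y' = π (α.eraseIdx j) * u := by rw [← h1, hex]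
      exact ih y' hy'J hy'len _ hz'K hxyz'
    · push_neg at hjα
      rw [List.eraseIdx_append_of_length_le hjα, cs.wordProd_append, ← hzα] at hex
      have hus : u * s i = π (β.eraseIdx (j - α.length)) := by
        rw [mul_assoc] at hex
        exact mul_left_cancel hex
      have hjβ : j - α.length < β.length := by
        rw [List.length_append] at hj
        omega
      have hlt : ℓ (u * s i) < ℓ u := by
        have hle := cs.length_wordProd_le (β.eraseIdx (j - α.length))
        rw [← hus] at hle
        rw [List.length_eraseIdx, if_pos hjβ] at hle
        have : ℓ u = β.length := by rw [hβ]; exact hβlen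
        omega
      have hge := hminu 1 (one_mem _) (s i) (Subgroup.subset_closure hsiJ)
      rw [one_mul] at hge
      omega
lemma length_mulEquiv_le (σ : W ≃* W) (hσ : ∀ i : B, σ (s i) ∈ Set.range cs.simple)
    (w : W) : ℓ (σ w) ≤ ℓ w := by
  obtain ⟨ω, hωlen, hω⟩ := cs.exists_reduced_word w
  have key : ∀ ω : List B, ∃ ω' : List B, ω'.length = ω.length ∧ σ (π ω) = π ω' := by
    intro ω
    induction ω with
    | nil => exact ⟨[], rfl, by simp⟩
    | cons i ω ih =>
      obtain ⟨ω', hlen, hπ⟩ := ih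
      obtain ⟨i', hi'⟩ := hσ i
      exact ⟨i' :: ω', by simp [hlen], by rw [cs.wordProd_cons, map_mul, hπ, ← hi',
        cs.wordProd_cons]⟩
  obtain ⟨ω', hlen, hπ⟩ := key ω
  replace hωlen : ω.length = ℓ (π ω) := hωlen.symm
  rw [hω, hπ]
  calc ℓ (π ω') ≤ ω'.length := cs.length_wordProd_le ω'
    _ = ω.length := hlen
    _ = ℓ (π ω) := hωlen

lemma symm_image (σ : W ≃* W) {A : Set W} (hA : σ '' A = A) : σ.symm '' A = A := by
  conv_lhs => rw [← hA]
  rw [Set.image_image]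
  simp

lemma length_mulEquiv (σ : W ≃* W) (hσ : σ '' (Set.range cs.simple) = Set.range cs.simple)
    (w : W) : ℓ (σ w) = ℓ w := by
  have h1 : ∀ i : B, σ (s i) ∈ Set.range cs.simple := by
    intro i
    exact hσ ▸ Set.mem_image_of_mem σ (Set.mem_range_self i)
  have hσ' : σ.symm '' (Set.range cs.simple) = Set.range cs.simple := symm_image σ hσ
  have h2 : ∀ i : B, σ.symm (s i) ∈ Set.range cs.simple := by
    intro i
    exact hσ' ▸ Set.mem_image_of_mem σ.symm (Set.mem_range_self i)
  refine le_antisymm (length_mulEquiv_le cs σ h1 w) ?_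
  have := length_mulEquiv_le cs σ.symm h2 (σ w)
  rwa [MulEquiv.symm_apply_apply] at this

lemma mem_closure_of_image_eq (σ : W ≃* W) {A : Set W} (hA : σ '' A = A) {w : W}
    (hw : w ∈ Subgroup.closure A) : σ w ∈ Subgroup.closure A := by
  induction hw using Subgroup.closure_induction with
  | mem w hw => exact Subgroup.subset_closure (hA ▸ Set.mem_image_of_mem σ hw)
  | one => rw [map_one]; exact one_mem _
  | mul a b _ _ iha ihb => rw [map_mul]; exact mul_mem iha ihb
  | inv a _ iha => rw [map_inv]; exact inv_mem iha

end Stmt6Aux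

/-- The Coxeter-combinatorial claim inside the proof of Proposition 6.1: let `σ` be an
automorphism of a Coxeter group `W` permuting the set of simple reflections, and let
`J`, `K` be `σ`-stable subsets of the simple reflections, generating the standard
parabolic subgroups `W_J`, `W_K`. If `x` has minimal length in the double coset
`W_K x W_J`, and `x * y = z * σ x` for some `y ∈ W_J`, `z ∈ W_K`, then `ℓ(y) = ℓ(z)` and
`σ x = x`. -/
theorem stmt_6 {B W : Type*} [Group W] {M : CoxeterMatrix B}
    (cs : CoxeterSystem M W) (σ : W ≃* W)
    (hσ : σ '' (Set.range cs.simple) = Set.range cs.simple)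
    (J K : Set W) (hJ : J ⊆ Set.range cs.simple) (hK : K ⊆ Set.range cs.simple)
    (hJσ : σ '' J = J) (hKσ : σ '' K = K)
    (x : W)
    (hmin : ∀ z ∈ Subgroup.closure K, ∀ y ∈ Subgroup.closure J,
      cs.length x ≤ cs.length (z * x * y))
    (y : W) (hy : y ∈ Subgroup.closure J)
    (z : W) (hz : z ∈ Subgroup.closure K)
    (hxy : x * y = z * σ x) :
    cs.length y = cs.length z ∧ σ x = x := by
  have hσlen : ∀ w, cs.length (σ w) = cs.length w := Stmt6Aux.length_mulEquiv cs σ hσ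
  have hKσ' : σ.symm '' K = K := Stmt6Aux.symm_image σ hKσ
  have hJσ' : σ.symm '' J = J := Stmt6Aux.symm_image σ hJσ
  have hminσ : ∀ z' ∈ Subgroup.closure K, ∀ y' ∈ Subgroup.closure J,
      cs.length (σ x) ≤ cs.length (z' * σ x * y') := by
    intro z' hz' y' hy'
    have hz0 : σ.symm z' ∈ Subgroup.closure K :=
      Stmt6Aux.mem_closure_of_image_eq σ.symm hKσ' hz'
    have hy0 : σ.symm y' ∈ Subgroup.closure J :=
      Stmt6Aux.mem_closure_of_image_eq σ.symm hJσ' hy'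
    have he : z' * σ x * y' = σ (σ.symm z' * x * σ.symm y') := by
      rw [map_mul, map_mul, MulEquiv.apply_symm_apply, MulEquiv.apply_symm_apply]
    rw [he, hσlen, hσlen]
    exact hmin _ hz0 _ hy0
  have hminxr : ∀ y' ∈ Subgroup.closure J, cs.length x ≤ cs.length (x * y') := by
    intro y' hy'
    have := hmin 1 (one_mem _) y' hy'
    rwa [one_mul] at this
  have hminσl : ∀ z' ∈ Subgroup.closure K, cs.length (σ x) ≤ cs.length (z' * σ x) := by
    intro z' hz'
    have := hminσ z' hz' 1 (one_mem _)
    rwa [mul_one] at this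
  have hlen1 : cs.length (x * y) = cs.length x + cs.length y :=
    Stmt6Aux.length_mul_right_add cs hJ x hminxr y hy
  have hlen2 : cs.length (z * σ x) = cs.length z + cs.length (σ x) :=
    Stmt6Aux.length_mul_left_add cs hK (σ x) hminσl z hz
  constructor
  · rw [hxy, hlen2, hσlen] at hlen1
    omega
  · exact Stmt6Aux.unique_min cs hJ hK x (σ x) hmin hminσ (cs.length y) y hy rfl z hz hxy
end
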